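/- Let N ≥ 1, 1 ≤ k ≤ N, d = ⌊N/k⌋ and r = N - k·d. Then D(N,k) is isomorphic as a real Lie algebra to the direct sum of (k - r) copies of u(d) and r copies of u(d+1). In particular, dim D(N,k) = k·d² + 2·r·d + r = d·(N + r) + r. -/

import Mathlib

open Matrix
attribute [local instance] LieRing.ofAssociativeRing

lemma banded_mul {N k : ℕ} {A B : Matrix (Fin N) (Fin N) ℂ}
    (hA : ∀ i j : Fin N, ¬ ((k : ℤ) ∣ ((i : ℤ) - (j : ℤ))) → A i j = 0)
    (hB : ∀ i j : Fin N, ¬ ((k : ℤ) ∣ ((i : ℤ) - (j : ℤ))) → B i j = 0) :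
    ∀ i j : Fin N, ¬ ((k : ℤ) ∣ ((i : ℤ) - (j : ℤ))) → (A * B) i j = 0 := by
  intro i j h
  rw [Matrix.mul_apply]
  apply Finset.sum_eq_zero
  intro x _
  by_cases h1 : (k : ℤ) ∣ ((i : ℤ) - (x : ℤ))
  · by_cases h2 : (k : ℤ) ∣ ((x : ℤ) - (j : ℤ))
    · exact absurd (by have := dvd_add h1 h2; simpa using this) h
    · rw [hB x j h2, mul_zero]
  · rw [hA i x h1, zero_mul]

/-- `D(N,k)`: skew-Hermitian `N × N` matrices supported on the diagonals at
integer multiples of `k`, as a real Lie subalgebra. -/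
def DSub (N k : ℕ) : LieSubalgebra ℝ (Matrix (Fin N) (Fin N) ℂ) where
  carrier := {A | Aᴴ = -A ∧ ∀ i j : Fin N, ¬ ((k : ℤ) ∣ ((i : ℤ) - (j : ℤ))) → A i j = 0}
  add_mem' := by
    intro A B hA hB
    refine ⟨?_, ?_⟩
    · simp only [Matrix.conjTranspose_add, hA.1, hB.1]; abel
    · intro i j h
      simp [Matrix.add_apply, hA.2 i j h, hB.2 i j h]
  zero_mem' := by exact ⟨by simp, fun i j _ => rfl⟩
  smul_mem' := by
    intro c A hA
    refine ⟨by simp [Matrix.conjTranspose_smul, hA.1], fun i j h => ?_⟩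
    simp [Matrix.smul_apply, hA.2 i j h]
  lie_mem' := by
    intro A B hA hB
    refine ⟨?_, ?_⟩
    · simp only [Ring.lie_def, Matrix.conjTranspose_sub, Matrix.conjTranspose_mul, hA.1, hB.1]
      noncomm_ring
    · intro i j h
      simp only [Ring.lie_def, Matrix.sub_apply]
      rw [banded_mul hA.2 hB.2 i j h, banded_mul hB.2 hA.2 i j h, sub_zero]

/-- The direct sum of the unitary Lie algebras `u(sz a)`, `a : Fin k`, realized as the
real Lie subalgebra of componentwise skew-Hermitian tuples inside the product of the
matrix algebras. -/
def uPiSub (k : ℕ) (sz : Fin k → ℕ) :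
    LieSubalgebra ℝ (∀ a : Fin k, Matrix (Fin (sz a)) (Fin (sz a)) ℂ) where
  carrier := {f | ∀ a : Fin k, (f a)ᴴ = -(f a)}
  add_mem' := by
    intro f g hf hg a
    simp only [Pi.add_apply, Matrix.conjTranspose_add, hf a, hg a]
    abel
  zero_mem' := by intro a; simp
  smul_mem' := by
    intro c f hf a
    simp [Pi.smul_apply, Matrix.conjTranspose_smul, hf a]
  lie_mem' := by
    intro f g hf hg a
    simp only [Ring.lie_def, Pi.sub_apply, Pi.mul_apply, Matrix.conjTranspose_sub,
      Matrix.conjTranspose_mul, hf a, hg a]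
    noncomm_ring

noncomputable section

def skewSM (n : ℕ) : Submodule ℝ (Matrix (Fin n) (Fin n) ℂ) where
  carrier := {A | Aᴴ = -A}
  add_mem' := by
    intro A B hA hB
    simp only [Set.mem_setOf_eq] at *
    rw [conjTranspose_add, hA, hB]; abel
  zero_mem' := by simp
  smul_mem' := by
    intro c A hA
    simp only [Set.mem_setOf_eq] at *
    rw [conjTranspose_smul, hA]
    simp

def selfSM (n : ℕ) : Submodule ℝ (Matrix (Fin n) (Fin n) ℂ) where
  carrier := {A | Aᴴ = A}
  add_mem' := by
    intro A B hA hB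
    simp only [Set.mem_setOf_eq] at *
    rw [conjTranspose_add, hA, hB]
  zero_mem' := by simp
  smul_mem' := by
    intro c A hA
    simp only [Set.mem_setOf_eq] at *
    rw [conjTranspose_smul, hA]
    simp

def skewEquivSelf (n : ℕ) : skewSM n ≃ₗ[ℝ] selfSM n where
  toFun A := ⟨Complex.I • (A : Matrix (Fin n) (Fin n) ℂ), by
    have hA : (A : Matrix (Fin n) (Fin n) ℂ)ᴴ = -(A : Matrix (Fin n) (Fin n) ℂ) := A.2
    show (Complex.I • (A : Matrix (Fin n) (Fin n) ℂ))ᴴ = _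
    rw [conjTranspose_smul, hA]
    simp [Complex.star_def, Complex.conj_I]⟩
  invFun B := ⟨(-Complex.I) • (B : Matrix (Fin n) (Fin n) ℂ), by
    have hB : (B : Matrix (Fin n) (Fin n) ℂ)ᴴ = (B : Matrix (Fin n) (Fin n) ℂ) := B.2
    show ((-Complex.I) • (B : Matrix (Fin n) (Fin n) ℂ))ᴴ = _
    rw [conjTranspose_smul, hB]
    simp [Complex.star_def, Complex.conj_I]⟩
  left_inv A := by
    ext i j
    simp only [Matrix.smul_apply, smul_smul, smul_eq_mul]
    rw [← mul_assoc]
    norm_num [Complex.I_mul_I]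
  right_inv B := by
    ext i j
    simp only [Matrix.smul_apply, smul_smul, smul_eq_mul]
    rw [← mul_assoc]
    norm_num [Complex.I_mul_I]
  map_add' A B := by
    ext i j
    simp [mul_add]
  map_smul' c A := by
    ext i j
    simp only [SetLike.val_smul, Matrix.smul_apply, smul_eq_mul, RingHom.id_apply,
      Complex.real_smul]
    ring

def matrixEquivProd (n : ℕ) :
    Matrix (Fin n) (Fin n) ℂ ≃ₗ[ℝ] (selfSM n × skewSM n) where
  toFun A := (⟨(1/2 : ℝ) • (A + Aᴴ), by
      show ((1/2 : ℝ) • (A + Aᴴ))ᴴ = _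
      rw [conjTranspose_smul, conjTranspose_add, conjTranspose_conjTranspose]
      simp [add_comm]⟩,
    ⟨(1/2 : ℝ) • (A - Aᴴ), by
      show ((1/2 : ℝ) • (A - Aᴴ))ᴴ = _
      rw [conjTranspose_smul, conjTranspose_sub, conjTranspose_conjTranspose]
      simp
      module⟩)
  invFun P := (P.1 : Matrix (Fin n) (Fin n) ℂ) + (P.2 : Matrix (Fin n) (Fin n) ℂ)
  left_inv A := by
    ext i j
    simp only [Matrix.add_apply, Matrix.smul_apply, Matrix.sub_apply, Complex.real_smul]
    push_cast
    ring
  right_inv P := by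
    obtain ⟨⟨S, hS⟩, ⟨K, hK⟩⟩ := P
    have hS' : Sᴴ = S := hS
    have hK' : Kᴴ = -K := hK
    ext : 1 <;> apply Subtype.ext <;>
      · simp only [conjTranspose_add, hS', hK']
        ext i j
        simp only [Matrix.add_apply, Matrix.smul_apply, Matrix.sub_apply, Matrix.neg_apply, Complex.real_smul]
        push_cast
        ring
  map_add' A B := by
    ext : 1 <;> apply Subtype.ext <;>
      · simp only [conjTranspose_add]
        ext i j
        simp only [Matrix.add_apply, Matrix.smul_apply, Matrix.sub_apply, Prod.fst_add, Prod.snd_add,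
          Submodule.coe_add, Complex.real_smul]
        push_cast
        ring
  map_smul' c A := by
    ext : 1 <;> apply Subtype.ext <;>
      · simp only [RingHom.id_apply, conjTranspose_smul, star_trivial]
        ext i j
        simp only [Matrix.add_apply, Matrix.smul_apply, Matrix.sub_apply, Prod.smul_fst, Prod.smul_snd,
          SetLike.val_smul, Complex.real_smul]
        push_cast
        ring

lemma finrank_skewSM (n : ℕ) : Module.finrank ℝ (skewSM n) = n ^ 2 := by
  have h1 : Module.finrank ℝ (Matrix (Fin n) (Fin n) ℂ)
      = Module.finrank ℝ (selfSM n) + Module.finrank ℝ (skewSM n) := by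
    rw [(matrixEquivProd n).finrank_eq, Module.finrank_prod]
  have h2 : Module.finrank ℝ (selfSM n) = Module.finrank ℝ (skewSM n) :=
    ((skewEquivSelf n).symm.finrank_eq)
  have h3 : Module.finrank ℝ (Matrix (Fin n) (Fin n) ℂ) = 2 * n ^ 2 := by
    have := Module.finrank_mul_finrank ℝ ℂ (Matrix (Fin n) (Fin n) ℂ)
    rw [Complex.finrank_real_complex] at this
    rw [← this, Module.finrank_matrix]
    simp [pow_two]
  omega

end

/-! ### Auxiliary membership lemmas -/

lemma mem_DSub_iff {N k : ℕ} {A : Matrix (Fin N) (Fin N) ℂ} :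
    A ∈ DSub N k ↔ (Aᴴ = -A ∧ ∀ i j : Fin N, ¬ ((k : ℤ) ∣ ((i : ℤ) - (j : ℤ))) → A i j = 0) :=
  Iff.rfl

lemma mem_uPiSub_iff {k : ℕ} {sz : Fin k → ℕ}
    {f : ∀ a : Fin k, Matrix (Fin (sz a)) (Fin (sz a)) ℂ} :
    f ∈ uPiSub k sz ↔ ∀ a : Fin k, (f a)ᴴ = -(f a) :=
  Iff.rfl

/-! ### block sizes and index arithmetic -/

abbrev szf (k d r : ℕ) : Fin k → ℕ := fun a : Fin k => if (a : ℕ) < r then d + 1 else d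


lemma idx_lt (N k d r : ℕ) (hN : N = k * d + r) (hrk : r < k)
    (a : Fin k) (s : Fin (szf k d r a)) : (a : ℕ) + (s : ℕ) * k < N := by
  obtain ⟨sv, hs⟩ := s
  show (a : ℕ) + sv * k < N
  unfold szf at hs
  have ha := a.2
  by_cases h : (a : ℕ) < r
  · rw [if_pos h] at hs
    have h2 : sv * k ≤ d * k := Nat.mul_le_mul_right k (by omega)
    have h3 : d * k = k * d := by ring
    omega
  · rw [if_neg h] at hs
    have h2 : (sv + 1) * k ≤ d * k := Nat.mul_le_mul_right k (by omega)
    have h3 : (sv + 1) * k = sv * k + k := by ring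
    have h4 : d * k = k * d := by ring
    omega

def iot (N k d r : ℕ) (hN : N = k * d + r) (hrk : r < k)
    (a : Fin k) (s : Fin (szf k d r a)) : Fin N :=
  ⟨(a : ℕ) + (s : ℕ) * k, idx_lt N k d r hN hrk a s⟩

def res (N k d r : ℕ) (hN : N = k * d + r) (hrk : r < k) (i : Fin N) : Fin k :=
  ⟨(i : ℕ) % k, Nat.mod_lt _ (lt_of_le_of_lt (Nat.zero_le r) hrk)⟩

lemma quo_lt (N k d r : ℕ) (hN : N = k * d + r) (hrk : r < k) (i : Fin N) :
    (i : ℕ) / k < szf k d r (res N k d r hN hrk i) := by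
  have hk : 0 < k := lt_of_le_of_lt (Nat.zero_le r) hrk
  have h1 : k * ((i : ℕ) / k) + (i : ℕ) % k = (i : ℕ) := Nat.div_add_mod _ _
  have hi := i.2
  show (i : ℕ) / k < if (i : ℕ) % k < r then d + 1 else d
  by_cases h : (i : ℕ) % k < r
  · rw [if_pos h]
    by_contra hc
    push_neg at hc
    have h2 : k * (d + 1) ≤ k * ((i : ℕ) / k) := Nat.mul_le_mul_left k hc
    have h3 : k * (d + 1) = k * d + k := by ring
    omega
  · rw [if_neg h]
    by_contra hc
    push_neg at hc
    have h2 : k * d ≤ k * ((i : ℕ) / k) := Nat.mul_le_mul_left k hc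
    omega

def quo (N k d r : ℕ) (hN : N = k * d + r) (hrk : r < k) (i : Fin N) :
    Fin (szf k d r (res N k d r hN hrk i)) :=
  ⟨(i : ℕ) / k, quo_lt N k d r hN hrk i⟩

lemma iot_mod (N k d r : ℕ) (hN : N = k * d + r) (hrk : r < k)
    (a : Fin k) (s : Fin (szf k d r a)) :
    ((iot N k d r hN hrk a s : Fin N) : ℕ) % k = (a : ℕ) := by
  show ((a : ℕ) + (s : ℕ) * k) % k = (a : ℕ)
  rw [Nat.add_mul_mod_self_right, Nat.mod_eq_of_lt a.2]

lemma iot_div (N k d r : ℕ) (hN : N = k * d + r) (hrk : r < k)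
    (a : Fin k) (s : Fin (szf k d r a)) :
    ((iot N k d r hN hrk a s : Fin N) : ℕ) / k = (s : ℕ) := by
  show ((a : ℕ) + (s : ℕ) * k) / k = (s : ℕ)
  rw [Nat.add_mul_div_right _ _ (lt_of_le_of_lt (Nat.zero_le r) hrk),
    Nat.div_eq_of_lt a.2, zero_add]

lemma res_iot (N k d r : ℕ) (hN : N = k * d + r) (hrk : r < k)
    (a : Fin k) (s : Fin (szf k d r a)) :
    res N k d r hN hrk (iot N k d r hN hrk a s) = a :=
  Fin.ext (iot_mod N k d r hN hrk a s)

/-- The index equivalence between `Σ a, Fin (szf a)` and `Fin N`. -/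
def idxEquiv (N k d r : ℕ) (hN : N = k * d + r) (hrk : r < k) :
    (Σ a : Fin k, Fin (szf k d r a)) ≃ Fin N where
  toFun p := iot N k d r hN hrk p.1 p.2
  invFun i := ⟨res N k d r hN hrk i, quo N k d r hN hrk i⟩
  left_inv p := by
    obtain ⟨a, s⟩ := p
    have h1 : res N k d r hN hrk (iot N k d r hN hrk a s) = a := res_iot N k d r hN hrk a s
    refine Sigma.ext h1 ?_
    refine (Fin.heq_ext_iff (congrArg (szf k d r) h1)).2 ?_
    exact iot_div N k d r hN hrk a s
  right_inv i := by
    apply Fin.ext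
    show (i : ℕ) % k + (i : ℕ) / k * k = (i : ℕ)
    exact Nat.mod_add_div' _ _


/-! ### bandedness in terms of residues -/

lemma dvd_iff_mod {k : ℕ} {N : ℕ} (i j : Fin N) :
    ((k : ℤ) ∣ ((i : ℤ) - (j : ℤ))) ↔ (i : ℕ) % k = (j : ℕ) % k := by
  have : ((i : Fin N) : ℤ) = ((i : ℕ) : ℤ) := rfl
  constructor
  · intro h
    exact (Nat.modEq_iff_dvd.2 h).symm
  · intro h
    exact Nat.modEq_iff_dvd.1 h.symm

lemma banded_of_mem {N k : ℕ} {A : Matrix (Fin N) (Fin N) ℂ}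
    (hA : ∀ i j : Fin N, ¬ ((k : ℤ) ∣ ((i : ℤ) - (j : ℤ))) → A i j = 0)
    (i j : Fin N) (h : (i : ℕ) % k ≠ (j : ℕ) % k) : A i j = 0 :=
  hA i j (fun hd => h ((dvd_iff_mod i j).1 hd))

/-! ### the block decomposition maps -/

lemma f_congr {k : ℕ} {sz : Fin k → ℕ} (f : ∀ a : Fin k, Matrix (Fin (sz a)) (Fin (sz a)) ℂ)
    {a b : Fin k} (hab : b = a) {s t : Fin (sz a)} {u : Fin (sz b)} {v : Fin (sz b)}
    (hu : (u : ℕ) = (s : ℕ)) (hv : (v : ℕ) = (t : ℕ)) : f b u v = f a s t := by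
  subst hab
  rw [Fin.ext hu, Fin.ext hv]

def phiFun (N k d r : ℕ) (hN : N = k * d + r) (hrk : r < k)
    (A : Matrix (Fin N) (Fin N) ℂ) :
    ∀ a : Fin k, Matrix (Fin (szf k d r a)) (Fin (szf k d r a)) ℂ :=
  fun a => Matrix.of fun s t => A (iot N k d r hN hrk a s) (iot N k d r hN hrk a t)

def psiFun (N k d r : ℕ) (hN : N = k * d + r) (hrk : r < k)
    (f : ∀ a : Fin k, Matrix (Fin (szf k d r a)) (Fin (szf k d r a)) ℂ) :
    Matrix (Fin N) (Fin N) ℂ :=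
  Matrix.of fun i j =>
    if h : (i : ℕ) % k = (j : ℕ) % k then
      f (res N k d r hN hrk i) (quo N k d r hN hrk i)
        (Fin.cast (congrArg (szf k d r) (Fin.ext h.symm)) (quo N k d r hN hrk j))
    else 0

lemma phi_mul (N k d r : ℕ) (hN : N = k * d + r) (hrk : r < k)
    {A B : Matrix (Fin N) (Fin N) ℂ}
    (hA : ∀ i j : Fin N, ¬ ((k : ℤ) ∣ ((i : ℤ) - (j : ℤ))) → A i j = 0)
    (a : Fin k) (s t : Fin (szf k d r a)) :
    (A * B) (iot N k d r hN hrk a s) (iot N k d r hN hrk a t) =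
      ∑ u : Fin (szf k d r a),
        A (iot N k d r hN hrk a s) (iot N k d r hN hrk a u) *
        B (iot N k d r hN hrk a u) (iot N k d r hN hrk a t) := by
  rw [Matrix.mul_apply]
  calc
    ∑ x : Fin N, A (iot N k d r hN hrk a s) x * B x (iot N k d r hN hrk a t)
      = ∑ p : (Σ b : Fin k, Fin (szf k d r b)),
          A (iot N k d r hN hrk a s) (idxEquiv N k d r hN hrk p) *
          B (idxEquiv N k d r hN hrk p) (iot N k d r hN hrk a t) :=
      (Equiv.sum_comp (idxEquiv N k d r hN hrk) _).symm
    _ = ∑ b : Fin k, ∑ u : Fin (szf k d r b),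
          A (iot N k d r hN hrk a s) (iot N k d r hN hrk b u) *
          B (iot N k d r hN hrk b u) (iot N k d r hN hrk a t) := by
      rw [← Finset.univ_sigma_univ, Finset.sum_sigma]
      rfl
    _ = ∑ u : Fin (szf k d r a),
          A (iot N k d r hN hrk a s) (iot N k d r hN hrk a u) *
          B (iot N k d r hN hrk a u) (iot N k d r hN hrk a t) := by
      refine Finset.sum_eq_single a ?_ (by simp)
      intro b _ hba
      apply Finset.sum_eq_zero
      intro u _
      rw [banded_of_mem hA (iot N k d r hN hrk a s) (iot N k d r hN hrk b u) ?_, zero_mul]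
      rw [iot_mod, iot_mod]
      exact fun h => hba (Fin.ext h.symm)

lemma phi_mem (N k d r : ℕ) (hN : N = k * d + r) (hrk : r < k)
    {A : Matrix (Fin N) (Fin N) ℂ} (hA : A ∈ DSub N k) :
    phiFun N k d r hN hrk A ∈ uPiSub k (szf k d r) := by
  intro a
  ext s t
  have h := congrFun (congrFun hA.1 (iot N k d r hN hrk a s)) (iot N k d r hN hrk a t)
  simp only [Matrix.conjTranspose_apply, Matrix.neg_apply] at h ⊢
  exact h

lemma psi_mem (N k d r : ℕ) (hN : N = k * d + r) (hrk : r < k)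
    {f : ∀ a : Fin k, Matrix (Fin (szf k d r a)) (Fin (szf k d r a)) ℂ}
    (hf : f ∈ uPiSub k (szf k d r)) :
    psiFun N k d r hN hrk f ∈ DSub N k := by
  constructor
  · ext i j
    simp only [Matrix.conjTranspose_apply, Matrix.neg_apply, psiFun, Matrix.of_apply]
    by_cases h : (i : ℕ) % k = (j : ℕ) % k
    · rw [dif_pos h.symm, dif_pos h]
      have hskew := congrFun (congrFun (hf (res N k d r hN hrk j))
        (Fin.cast (congrArg (szf k d r) (Fin.ext h)) (quo N k d r hN hrk i)))
        (quo N k d r hN hrk j)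
      simp only [Matrix.conjTranspose_apply, Matrix.neg_apply] at hskew
      rw [hskew]
      congr 1
      exact f_congr f (Fin.ext h.symm) (by simp) (by simp)
    · rw [dif_neg (fun hh => h hh.symm), dif_neg h, star_zero, neg_zero]
  · intro i j hd
    have h : (i : ℕ) % k ≠ (j : ℕ) % k := fun hh => hd ((dvd_iff_mod i j).2 hh)
    simp only [psiFun, Matrix.of_apply]
    rw [dif_neg h]

lemma phi_psi (N k d r : ℕ) (hN : N = k * d + r) (hrk : r < k)
    (f : ∀ a : Fin k, Matrix (Fin (szf k d r a)) (Fin (szf k d r a)) ℂ) :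
    phiFun N k d r hN hrk (psiFun N k d r hN hrk f) = f := by
  funext a
  ext s t
  simp only [phiFun, psiFun, Matrix.of_apply]
  have hmod : ((iot N k d r hN hrk a s : Fin N) : ℕ) % k
      = ((iot N k d r hN hrk a t : Fin N) : ℕ) % k := by
    rw [iot_mod, iot_mod]
  rw [dif_pos hmod]
  exact f_congr f (res_iot N k d r hN hrk a s)
    (by simpa [quo] using iot_div N k d r hN hrk a s)
    (by simpa [quo] using iot_div N k d r hN hrk a t)

lemma psi_phi (N k d r : ℕ) (hN : N = k * d + r) (hrk : r < k)
    {A : Matrix (Fin N) (Fin N) ℂ} (hA : A ∈ DSub N k) :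
    psiFun N k d r hN hrk (phiFun N k d r hN hrk A) = A := by
  ext i j
  simp only [psiFun, phiFun, Matrix.of_apply]
  by_cases h : (i : ℕ) % k = (j : ℕ) % k
  · rw [dif_pos h]
    congr 1 <;> apply Fin.ext
    · show (i : ℕ) % k + (i : ℕ) / k * k = (i : ℕ)
      exact Nat.mod_add_div' _ _
    · show (i : ℕ) % k + (j : ℕ) / k * k = (j : ℕ)
      rw [h]
      exact Nat.mod_add_div' _ _
  · rw [dif_neg h]
    exact (banded_of_mem hA.2 i j h).symm

/-! ### the Lie algebra isomorphism -/

noncomputable def phiHom (N k d r : ℕ) (hN : N = k * d + r) (hrk : r < k) :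
    ↥(DSub N k) →ₗ⁅ℝ⁆ ↥(uPiSub k (szf k d r)) where
  toFun A := ⟨phiFun N k d r hN hrk A.1, phi_mem N k d r hN hrk A.2⟩
  map_add' A B := by apply Subtype.ext; funext a; ext s t; rfl
  map_smul' c A := by apply Subtype.ext; funext a; ext s t; rfl
  map_lie' {A B} := by
    apply Subtype.ext
    funext a
    ext s t
    show (⁅(A : Matrix (Fin N) (Fin N) ℂ), (B : Matrix (Fin N) (Fin N) ℂ)⁆)
        (iot N k d r hN hrk a s) (iot N k d r hN hrk a t)
      = (⁅phiFun N k d r hN hrk A.1 a, phiFun N k d r hN hrk B.1 a⁆) s t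
    rw [Ring.lie_def, Ring.lie_def]
    simp only [Matrix.sub_apply]
    rw [phi_mul N k d r hN hrk A.2.2, phi_mul N k d r hN hrk B.2.2,
      Matrix.mul_apply, Matrix.mul_apply]
    rfl

noncomputable def theEquiv (N k d r : ℕ) (hN : N = k * d + r) (hrk : r < k) :
    ↥(DSub N k) ≃ₗ⁅ℝ⁆ ↥(uPiSub k (szf k d r)) :=
  { phiHom N k d r hN hrk with
    invFun := fun f => ⟨psiFun N k d r hN hrk f.1, psi_mem N k d r hN hrk f.2⟩
    left_inv := fun A => Subtype.ext (psi_phi N k d r hN hrk A.2)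
    right_inv := fun f => Subtype.ext (phi_psi N k d r hN hrk f.1) }

/-! ### dimension count -/

noncomputable def uPiEquiv (k : ℕ) (sz : Fin k → ℕ) :
    ↥(uPiSub k sz) ≃ₗ[ℝ] ∀ a : Fin k, ↥(skewSM (sz a)) where
  toFun f a := ⟨f.1 a, f.2 a⟩
  map_add' f g := rfl
  map_smul' c f := rfl
  invFun g := ⟨fun a => (g a).1, fun a => (g a).2⟩
  left_inv f := rfl
  right_inv g := rfl

lemma finrank_uPiSub (k : ℕ) (sz : Fin k → ℕ) :
    Module.finrank ℝ ↥(uPiSub k sz) = ∑ a : Fin k, (sz a) ^ 2 := by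
  rw [(uPiEquiv k sz).finrank_eq, Module.finrank_pi_fintype]
  exact Finset.sum_congr rfl (fun a _ => finrank_skewSM (sz a))

lemma sum_szf_sq (k d r : ℕ) (hrk : r ≤ k) :
    ∑ a : Fin k, (szf k d r a) ^ 2 = k * d ^ 2 + 2 * r * d + r := by
  have h1 : ∀ a : Fin k, (szf k d r a) ^ 2 = d ^ 2 + (if (a : ℕ) < r then 2 * d + 1 else 0) := by
    intro a; unfold szf; split <;> ring
  simp only [h1]
  rw [Finset.sum_add_distrib, Finset.sum_const, Finset.card_univ, Fintype.card_fin]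
  have h2 : ∑ a : Fin k, (if (a : ℕ) < r then 2 * d + 1 else 0)
      = ∑ i ∈ Finset.range k, (if i < r then 2 * d + 1 else 0) :=
    Fin.sum_univ_eq_sum_range (fun i => if i < r then 2 * d + 1 else 0) k
  rw [h2, ← Finset.sum_filter]
  have h3 : (Finset.range k).filter (fun i => i < r) = Finset.range r := by
    ext x
    simp only [Finset.mem_filter, Finset.mem_range]
    omega
  rw [h3, Finset.sum_const, Finset.card_range, smul_eq_mul, smul_eq_mul]
  ring

/-- Theorem 1 of the paper: with `d = ⌊N/k⌋` and `r = N - k·d`,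
`D(N,k) ≅ u(d)^(k-r) ⊕ u(d+1)^r` as real Lie algebras (the first `r` blocks have size
`d+1` and the remaining `k - r` blocks have size `d`), and
`dim D(N,k) = k·d² + 2·r·d + r = d·(N + r) + r`. -/
theorem DSub_structure (N k : ℕ) (hN : 1 ≤ N) (hk : 1 ≤ k) (hkN : k ≤ N)
    (d r : ℕ) (hd : d = N / k) (hr : r = N - k * d) :
    Nonempty (↥(DSub N k) ≃ₗ⁅ℝ⁆
      ↥(uPiSub k (fun a : Fin k => if (a : ℕ) < r then d + 1 else d))) ∧
    Module.finrank ℝ ↥(DSub N k) = k * d ^ 2 + 2 * r * d + r ∧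
    k * d ^ 2 + 2 * r * d + r = d * (N + r) + r := by
  have hk0 : 0 < k := hk
  have hdk : k * d ≤ N := by rw [hd]; exact Nat.mul_div_le N k
  have hN' : N = k * d + r := by omega
  have hrk : r < k := by
    by_contra hc
    push_neg at hc
    have h1 : (d + 1) * k ≤ N := by
      have h0 : (d + 1) * k = k * d + k := by ring
      omega
    have h2 : d + 1 ≤ N / k := (Nat.le_div_iff_mul_le hk0).2 h1
    omega
  refine ⟨⟨theEquiv N k d r hN' hrk⟩, ?_, ?_⟩
  · rw [(theEquiv N k d r hN' hrk).toLinearEquiv.finrank_eq]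
    rw [finrank_uPiSub, sum_szf_sq k d r (le_of_lt hrk)]
  · subst hN'
    ring
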